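/- Let (u^k) be generated by the deterministic RPDR iteration with nondecreasing relaxation parameters in [ρ_l, ρ_u] ⊂ (0,2), and let z_test^k = (x_test^k, y_test^k) be its transitional variables. Let B = B₁ × B₂ ⊂ dom F × dom G be a bounded set containing a saddle point of L. Then the ergodic averages z_{test,K} = (1/(K+1)) Σ_{k=0}^K z_test^k satisfy sup_{z∈B} H(z_{test,K}, z) ≤ (1/(2(K+1)ρ_l)) · sup_{(x,y)∈B} ‖u^0 − u‖²_M, where for each (x,y) ∈ B the comparison point is u = (x, y, x + σK*y, y − τKx); in particular the restricted primal–dual gap decays at rate O(1/K). -/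

import Mathlib

open scoped RealInnerProductSpace

section

variable {X Y : Type*}
  [NormedAddCommGroup X] [InnerProductSpace ℝ X] [CompleteSpace X]
  [NormedAddCommGroup Y] [InnerProductSpace ℝ Y] [CompleteSpace Y]

/-- The quadratic form `‖u‖²_𝐌` on `𝕌 = (X × Y)²`, where
`𝐌 = Diag[(N₁−I)/σ, (N₂−I)/τ, I/σ, I/τ]` and `u = (x, y, x̄, ȳ)`. -/
noncomputable def MnormSq (σ τ : ℝ) (N₁ : X →L[ℝ] X) (N₂ : Y →L[ℝ] Y)
    (u : X × Y × X × Y) : ℝ :=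
  (1 / σ) * ⟪N₁ u.1 - u.1, u.1⟫ + (1 / τ) * ⟪N₂ u.2.1 - u.2.1, u.2.1⟫
    + (1 / σ) * ‖u.2.2.1‖ ^ 2 + (1 / τ) * ‖u.2.2.2‖ ^ 2

private lemma RPDR.symm_inner (N : X →L[ℝ] X) (h : IsSelfAdjoint N) (v w : X) :
    ⟪N v, w⟫ = ⟪v, N w⟫ := by
  conv_lhs => rw [← h.adjoint_eq]
  exact ContinuousLinearMap.adjoint_inner_left N w v

private lemma RPDR.blockN (N : X →L[ℝ] X) (hsa : IsSelfAdjoint N)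
    (hpsd : ∀ w : X, ‖w‖ ^ 2 ≤ ⟪N w, w⟫)
    (σ ρ : ℝ) (hσ : 0 < σ) (hρ0 : 0 < ρ) (hρ2 : ρ ≤ 2) (v w : X) :
    2 * (-(1/σ) * (⟪N w - w, v⟫ + ⟪N w - w, w⟫))
      ≤ (1/ρ) * ((1/σ) * ⟪N v - v, v⟫ - (1/σ) * ⟪N (v + ρ • w) - (v + ρ • w), v + ρ • w⟫) := by
  have hq : (0:ℝ) ≤ ⟪N w - w, w⟫ := by
    have := hpsd w
    have h2 : ⟪N w - w, w⟫ = ⟪N w, w⟫ - ‖w‖^2 := by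
      rw [inner_sub_left, real_inner_self_eq_norm_sq]
    linarith
  have hexp : ⟪N (v + ρ • w) - (v + ρ • w), v + ρ • w⟫
      = ⟪N v - v, v⟫ + 2*ρ*⟪N w - w, v⟫ + ρ^2*⟪N w - w, w⟫ := by
    have hs : ⟪N v, w⟫ = ⟪N w, v⟫ := by
      rw [RPDR.symm_inner N hsa v w, real_inner_comm]
    simp only [map_add, map_smul, inner_sub_left, inner_add_left, inner_add_right,
      real_inner_smul_left, real_inner_smul_right, smul_sub, smul_add]
    ring_nf
    linear_combination ρ * hs + (-ρ) * (real_inner_comm w v)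
  rw [hexp]
  have h1 : (1/ρ) * ((1/σ) * ⟪N v - v, v⟫
        - (1/σ) * (⟪N v - v, v⟫ + 2*ρ*⟪N w - w, v⟫ + ρ^2*⟪N w - w, w⟫))
      = -(2/σ)*⟪N w - w, v⟫ - (ρ/σ)*⟪N w - w, w⟫ := by
    field_simp
    ring
  rw [h1]
  have hkey : (0:ℝ) ≤ (2 - ρ)/σ * ⟪N w - w, w⟫ :=
    mul_nonneg (div_nonneg (by linarith) hσ.le) hq
  have h2 : -(2/σ)*⟪N w - w, v⟫ - (ρ/σ)*⟪N w - w, w⟫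
        - 2 * (-(1/σ) * (⟪N w - w, v⟫ + ⟪N w - w, w⟫))
      = (2 - ρ)/σ * ⟪N w - w, w⟫ := by
    field_simp
    ring
  linarith [hkey, h2]

private lemma RPDR.blockI (σ ρ : ℝ) (hσ : 0 < σ) (hρ0 : 0 < ρ) (hρ2 : ρ ≤ 2) (v w : X) :
    2 * (-(1/σ) * (⟪w, v⟫ + ⟪w, w⟫))
      ≤ (1/ρ) * ((1/σ) * ⟪v, v⟫ - (1/σ) * ⟪v + ρ • w, v + ρ • w⟫) := by
  have hq : (0:ℝ) ≤ ⟪w, w⟫ := real_inner_self_nonneg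
  have hexp : ⟪v + ρ • w, v + ρ • w⟫ = ⟪v, v⟫ + 2*ρ*⟪w, v⟫ + ρ^2*⟪w, w⟫ := by
    simp only [inner_add_left, inner_add_right, real_inner_smul_left, real_inner_smul_right]
    ring_nf
    linear_combination (-ρ) * (real_inner_comm v w)
  rw [hexp]
  have h1 : (1/ρ) * ((1/σ) * ⟪v, v⟫ - (1/σ) * (⟪v, v⟫ + 2*ρ*⟪w, v⟫ + ρ^2*⟪w, w⟫))
      = -(2/σ)*⟪w, v⟫ - (ρ/σ)*⟪w, w⟫ := by
    field_simp
    ring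
  rw [h1]
  have hkey : (0:ℝ) ≤ (2 - ρ)/σ * ⟪w, w⟫ :=
    mul_nonneg (div_nonneg (by linarith) hσ.le) hq
  have h2 : -(2/σ)*⟪w, v⟫ - (ρ/σ)*⟪w, w⟫ - 2 * (-(1/σ) * (⟪w, v⟫ + ⟪w, w⟫))
      = (2 - ρ)/σ * ⟪w, w⟫ := by
    field_simp
    ring
  linarith [hkey, h2]

private lemma RPDR.core (F : X → ℝ) (G : Y → ℝ) (K : X →L[ℝ] Y)
    (σ τ : ℝ) (hσ : 0 < σ) (hτ : 0 < τ)
    (N₁ : X →L[ℝ] X) (N₂ : Y →L[ℝ] Y)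
    (xv x₀ xbv xts xss : X) (yv y₀ ybv yts yss : Y)
    (hxt : N₁ xts = (N₁ xv - xv) + xbv - σ • (ContinuousLinearMap.adjoint K) yts)
    (hyt : N₂ yts = (N₂ yv - yv) + ybv + τ • K xts)
    (hFs : σ * F xss + ⟪(2:ℝ) • xts - xbv - xss, x₀ - xss⟫ ≤ σ * F x₀)
    (hGs : τ * G yss + ⟪(2:ℝ) • yts - ybv - yss, y₀ - yss⟫ ≤ τ * G y₀) :
    F xss + ⟪K xss, y₀⟫ - G y₀ - (F x₀ + ⟪K x₀, yss⟫ - G yss)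
      ≤ -(1/σ) * (⟪N₁ (xts - xv) - (xts - xv), xv - x₀⟫ + ⟪N₁ (xts - xv) - (xts - xv), xts - xv⟫)
        + -(1/τ) * (⟪N₂ (yts - yv) - (yts - yv), yv - y₀⟫ + ⟪N₂ (yts - yv) - (yts - yv), yts - yv⟫)
        + -(1/σ) * (⟪xss - xts, xbv - (x₀ + σ • (ContinuousLinearMap.adjoint K) y₀)⟫ + ⟪xss - xts, xss - xts⟫)
        + -(1/τ) * (⟪yss - yts, ybv - (y₀ - τ • K x₀)⟫ + ⟪yss - yts, yss - yts⟫) := by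
  have hA : N₁ (xts - xv) - (xts - xv) = xbv - xts - σ • (ContinuousLinearMap.adjoint K) yts := by
    rw [map_sub, hxt]; module
  have hB : N₂ (yts - yv) - (yts - yv) = ybv - yts + τ • K xts := by
    rw [map_sub, hyt]; module
  have hFs' : F xss - F x₀ ≤ (1/σ) * ⟪(2:ℝ) • xts - xbv - xss, xss - x₀⟫ := by
    have hneg : ⟪(2:ℝ) • xts - xbv - xss, x₀ - xss⟫
        = -⟪(2:ℝ) • xts - xbv - xss, xss - x₀⟫ := by
      rw [← inner_neg_right]; congr 1; abel
    rw [hneg] at hFs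
    have h2 : σ * (F xss - F x₀) ≤ ⟪(2:ℝ) • xts - xbv - xss, xss - x₀⟫ := by linarith
    calc F xss - F x₀ = (1/σ) * (σ * (F xss - F x₀)) := by field_simp
    _ ≤ (1/σ) * ⟪(2:ℝ) • xts - xbv - xss, xss - x₀⟫ :=
        mul_le_mul_of_nonneg_left h2 (by positivity)
  have hGs' : G yss - G y₀ ≤ (1/τ) * ⟪(2:ℝ) • yts - ybv - yss, yss - y₀⟫ := by
    have hneg : ⟪(2:ℝ) • yts - ybv - yss, y₀ - yss⟫
        = -⟪(2:ℝ) • yts - ybv - yss, yss - y₀⟫ := by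
      rw [← inner_neg_right]; congr 1; abel
    rw [hneg] at hGs
    have h2 : τ * (G yss - G y₀) ≤ ⟪(2:ℝ) • yts - ybv - yss, yss - y₀⟫ := by linarith
    calc G yss - G y₀ = (1/τ) * (τ * (G yss - G y₀)) := by field_simp
    _ ≤ (1/τ) * ⟪(2:ℝ) • yts - ybv - yss, yss - y₀⟫ :=
        mul_le_mul_of_nonneg_left h2 (by positivity)
  have hid : (1/σ) * ⟪(2:ℝ) • xts - xbv - xss, xss - x₀⟫
        + (1/τ) * ⟪(2:ℝ) • yts - ybv - yss, yss - y₀⟫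
        + ⟪K xss, y₀⟫ - ⟪K x₀, yss⟫
      = -(1/σ) * (⟪N₁ (xts - xv) - (xts - xv), xv - x₀⟫ + ⟪N₁ (xts - xv) - (xts - xv), xts - xv⟫)
        + -(1/τ) * (⟪N₂ (yts - yv) - (yts - yv), yv - y₀⟫ + ⟪N₂ (yts - yv) - (yts - yv), yts - yv⟫)
        + -(1/σ) * (⟪xss - xts, xbv - (x₀ + σ • (ContinuousLinearMap.adjoint K) y₀)⟫ + ⟪xss - xts, xss - xts⟫)
        + -(1/τ) * (⟪yss - yts, ybv - (y₀ - τ • K x₀)⟫ + ⟪yss - yts, yss - yts⟫) := by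
    rw [hA, hB]
    simp only [inner_sub_left, inner_sub_right, inner_add_left, inner_add_right,
      real_inner_smul_left, real_inner_smul_right,
      ContinuousLinearMap.adjoint_inner_left, ContinuousLinearMap.adjoint_inner_right,
      map_sub, map_add, map_smul]
    simp only [real_inner_comm xbv xts, real_inner_comm xss xbv, real_inner_comm xss xts,
      real_inner_comm ybv yts, real_inner_comm yss ybv, real_inner_comm yss yts,
      real_inner_comm yss (K x₀), real_inner_comm yts (K xts), real_inner_comm yts (K x₀)]
    field_simp
    ring
  linarith [hFs', hGs', hid]

private lemma RPDR.abel_aux (ρl : ℝ) (hρl : 0 < ρl) (a r : ℕ → ℝ) (ha : ∀ k, 0 ≤ a k)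
    (hr : ∀ k, ρl ≤ r k) (hm : Monotone r) (n : ℕ) :
    ∑ k ∈ Finset.range n, (1 / r k) * (a k - a (k+1)) ≤ (1/ρl) * a 0 := by
  have hrpos : ∀ k, 0 < r k := fun k => lt_of_lt_of_le hρl (hr k)
  have key : ∀ m, (∑ k ∈ Finset.range m, (1 / r k) * (a k - a (k+1))) + (1 / r m) * a m
      ≤ (1 / r 0) * a 0 := by
    intro m
    induction m with
    | zero => simp
    | succ m ih =>
      rw [Finset.sum_range_succ]
      have h1 : 1 / r (m+1) ≤ 1 / r m :=
        one_div_le_one_div_of_le (hrpos m) (hm (Nat.le_succ m))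
      have h2 := mul_le_mul_of_nonneg_right h1 (ha (m+1))
      linarith
  have h3 := key n
  have h0 : 1 / r 0 ≤ 1 / ρl := one_div_le_one_div_of_le hρl (hr 0)
  have h1 : 0 ≤ (1 / r n) * a n := mul_nonneg (one_div_pos.mpr (hrpos n)).le (ha n)
  have h2 : (1 / r 0) * a 0 ≤ (1/ρl) * a 0 := mul_le_mul_of_nonneg_right h0 (ha 0)
  linarith


set_option maxHeartbeats 1000000 in
/-- **Theorem 2.7.** For the deterministic relaxed preconditioned Douglas–Rachford
iteration (RPDR) with nondecreasing relaxation parameters in `[ρ_l, ρ_u] ⊂ (0,2)`, the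
ergodic averages `z_{test,K}` of the transitional variables satisfy, for every bounded
set `B = B₁ × B₂ ⊂ dom F × dom G` containing a saddle point,
`sup_{z ∈ B} ℋ(z_{test,K}, z) ≤ (1/(2(K+1)ρ_l)) · sup_{(x,y) ∈ B} ‖u⁰ − u‖²_𝐌`,
where `u = (x, y, x + σK*y, y − τKx)`; in particular the restricted primal–dual gap
decays at rate `O(1/K)`. -/
theorem stmt_7
    (F : X → ℝ) (G : Y → ℝ)
    (hF : ConvexOn ℝ Set.univ F) (hFlsc : LowerSemicontinuous F)
    (hG : ConvexOn ℝ Set.univ G) (hGlsc : LowerSemicontinuous G)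
    (K : X →L[ℝ] Y)
    (σ τ : ℝ) (hσ : 0 < σ) (hτ : 0 < τ)
    (N₁ : X →L[ℝ] X) (N₂ : Y →L[ℝ] Y)
    (hN₁sa : IsSelfAdjoint N₁) (hN₂sa : IsSelfAdjoint N₂)
    (hN₁ : ∀ v : X, ‖v‖ ^ 2 ≤ ⟪N₁ v, v⟫)
    (hN₂ : ∀ v : Y, ‖v‖ ^ 2 ≤ ⟪N₂ v, v⟫)
    -- nondecreasing relaxation parameters in `[ρ_l, ρ_u] ⊂ (0, 2)`
    (ρ ρx ρy : ℕ → ℝ) (hρmono : Monotone ρ) (hρxmono : Monotone ρx)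
    (hρymono : Monotone ρy)
    (ρl ρu : ℝ) (hρl : 0 < ρl) (hρu : ρu < 2)
    (hρb : ∀ k, ρl ≤ ρ k ∧ ρ k ≤ ρu) (hρxb : ∀ k, ρl ≤ ρx k ∧ ρx k ≤ ρu)
    (hρyb : ∀ k, ρl ≤ ρy k ∧ ρy k ≤ ρu)
    -- the RPDR iteration sequence together with its transitional variables:
    -- `(xt k, yt k)` are the first two components of `𝒯 u^k`, and
    -- `(xtst (k+1), ytst (k+1))` are the transitional variables of step `k`
    (x xt xtst xb : ℕ → X) (y yt ytst yb : ℕ → Y)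
    (hxt : ∀ k, N₁ (xt k) = (N₁ (x k) - x k) + xb k
        - σ • (ContinuousLinearMap.adjoint K) (yt k))
    (hyt : ∀ k, N₂ (yt k) = (N₂ (y k) - y k) + yb k + τ • K (xt k))
    (hxtst : ∀ k, ∀ w : X,
        σ * F (xtst (k + 1)) + ⟪(2 : ℝ) • xt k - xb k - xtst (k + 1), w - xtst (k + 1)⟫
          ≤ σ * F w)
    (hytst : ∀ k, ∀ w : Y,
        τ * G (ytst (k + 1)) + ⟪(2 : ℝ) • yt k - yb k - ytst (k + 1), w - ytst (k + 1)⟫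
          ≤ τ * G w)
    (hx : ∀ k, x (k + 1) = (1 - ρ k) • x k + ρ k • xt k)
    (hy : ∀ k, y (k + 1) = (1 - ρ k) • y k + ρ k • yt k)
    (hxb : ∀ k, xb (k + 1) = xb k + ρx k • (xtst (k + 1) - xt k))
    (hyb : ∀ k, yb (k + 1) = yb k + ρy k • (ytst (k + 1) - yt k))
    -- a bounded set `B = B₁ × B₂` containing a saddle point
    (B₁ : Set X) (B₂ : Set Y)
    (hB₁ : Bornology.IsBounded B₁) (hB₂ : Bornology.IsBounded B₂)
    (hsaddle : ∃ xs ∈ B₁, ∃ ys ∈ B₂, ∀ (x' : X) (y' : Y),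
        (F xs + ⟪K xs, y'⟫ - G y') ≤ (F xs + ⟪K xs, ys⟫ - G ys)
        ∧ (F xs + ⟪K xs, ys⟫ - G ys) ≤ (F x' + ⟪K x', ys⟫ - G ys))
    -- the number of steps
    (Kit : ℕ) :
    ∀ x₀ ∈ B₁, ∀ y₀ ∈ B₂,
      (F ((Kit + 1 : ℝ)⁻¹ • ∑ k ∈ Finset.range (Kit + 1), xtst (k + 1))
          + ⟪K ((Kit + 1 : ℝ)⁻¹ • ∑ k ∈ Finset.range (Kit + 1), xtst (k + 1)), y₀⟫
          - G y₀)
        - (F x₀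
            + ⟪K x₀, (Kit + 1 : ℝ)⁻¹ • ∑ k ∈ Finset.range (Kit + 1), ytst (k + 1)⟫
            - G ((Kit + 1 : ℝ)⁻¹ • ∑ k ∈ Finset.range (Kit + 1), ytst (k + 1)))
      ≤ (1 / (2 * (Kit + 1 : ℝ) * ρl)) *
          sSup ((fun z : X × Y =>
            MnormSq σ τ N₁ N₂
              ((x 0, y 0, xb 0, yb 0)
                - (z.1, z.2, z.1 + σ • (ContinuousLinearMap.adjoint K) z.2,
                    z.2 - τ • K z.1))) '' (B₁ ×ˢ B₂)) := by
  intro x₀ hx₀B y₀ hy₀B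
  have hnpos : (0:ℝ) < (Kit:ℝ) + 1 := by positivity
  set A : ℕ → ℝ := fun k => (1/σ) * ⟪N₁ (x k - x₀) - (x k - x₀), x k - x₀⟫ with hAdef
  set Bq : ℕ → ℝ := fun k => (1/τ) * ⟪N₂ (y k - y₀) - (y k - y₀), y k - y₀⟫ with hBdef
  set Cq : ℕ → ℝ := fun k =>
    (1/σ) * ⟪xb k - (x₀ + σ • (ContinuousLinearMap.adjoint K) y₀),
      xb k - (x₀ + σ • (ContinuousLinearMap.adjoint K) y₀)⟫ with hCdef
  set Dq : ℕ → ℝ := fun k =>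
    (1/τ) * ⟪yb k - (y₀ - τ • K x₀), yb k - (y₀ - τ • K x₀)⟫ with hDdef
  set Hq : ℕ → ℝ := fun k =>
    F (xtst (k+1)) + ⟪K (xtst (k+1)), y₀⟫ - G y₀
      - (F x₀ + ⟪K x₀, ytst (k+1)⟫ - G (ytst (k+1))) with hHdef
  -- nonnegativity
  have hApos : ∀ k, 0 ≤ A k := by
    intro k
    have h1 := hN₁ (x k - x₀)
    have h2 : ⟪N₁ (x k - x₀) - (x k - x₀), x k - x₀⟫
        = ⟪N₁ (x k - x₀), x k - x₀⟫ - ‖x k - x₀‖^2 := by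
      rw [inner_sub_left, real_inner_self_eq_norm_sq]
    simp only [hAdef]
    have : (0:ℝ) ≤ ⟪N₁ (x k - x₀) - (x k - x₀), x k - x₀⟫ := by linarith
    positivity
  have hBpos : ∀ k, 0 ≤ Bq k := by
    intro k
    have h1 := hN₂ (y k - y₀)
    have h2 : ⟪N₂ (y k - y₀) - (y k - y₀), y k - y₀⟫
        = ⟪N₂ (y k - y₀), y k - y₀⟫ - ‖y k - y₀‖^2 := by
      rw [inner_sub_left, real_inner_self_eq_norm_sq]
    simp only [hBdef]
    have : (0:ℝ) ≤ ⟪N₂ (y k - y₀) - (y k - y₀), y k - y₀⟫ := by linarith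
    positivity
  have hCpos : ∀ k, 0 ≤ Cq k := by
    intro k
    simp only [hCdef]
    have : (0:ℝ) ≤ ⟪xb k - (x₀ + σ • (ContinuousLinearMap.adjoint K) y₀),
        xb k - (x₀ + σ • (ContinuousLinearMap.adjoint K) y₀)⟫ := real_inner_self_nonneg
    positivity
  have hDpos : ∀ k, 0 ≤ Dq k := by
    intro k
    simp only [hDdef]
    have : (0:ℝ) ≤ ⟪yb k - (y₀ - τ • K x₀), yb k - (y₀ - τ • K x₀)⟫ := real_inner_self_nonneg
    positivity
  -- per-step estimate
  have step : ∀ k, 2 * Hq k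
      ≤ (1/ρ k) * (A k - A (k+1)) + (1/ρ k) * (Bq k - Bq (k+1))
        + (1/ρx k) * (Cq k - Cq (k+1)) + (1/ρy k) * (Dq k - Dq (k+1)) := by
    intro k
    have hcore := RPDR.core F G K σ τ hσ hτ N₁ N₂ (x k) x₀ (xb k) (xt k) (xtst (k+1))
      (y k) y₀ (yb k) (yt k) (ytst (k+1)) (hxt k) (hyt k) (hxtst k x₀) (hytst k y₀)
    have hxk : x (k+1) - x₀ = (x k - x₀) + ρ k • (xt k - x k) := by rw [hx k]; module
    have hyk : y (k+1) - y₀ = (y k - y₀) + ρ k • (yt k - y k) := by rw [hy k]; module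
    have hxbk : xb (k+1) - (x₀ + σ • (ContinuousLinearMap.adjoint K) y₀)
        = (xb k - (x₀ + σ • (ContinuousLinearMap.adjoint K) y₀))
          + ρx k • (xtst (k+1) - xt k) := by rw [hxb k]; module
    have hybk : yb (k+1) - (y₀ - τ • K x₀)
        = (yb k - (y₀ - τ • K x₀)) + ρy k • (ytst (k+1) - yt k) := by rw [hyb k]; module
    have hb1 : 2 * (-(1/σ) * (⟪N₁ (xt k - x k) - (xt k - x k), x k - x₀⟫
          + ⟪N₁ (xt k - x k) - (xt k - x k), xt k - x k⟫))
        ≤ (1/ρ k) * (A k - A (k+1)) := by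
      simp only [hAdef]
      rw [hxk]
      exact RPDR.blockN N₁ hN₁sa hN₁ σ (ρ k) hσ (lt_of_lt_of_le hρl (hρb k).1)
        ((hρb k).2.trans hρu.le) _ _
    have hb2 : 2 * (-(1/τ) * (⟪N₂ (yt k - y k) - (yt k - y k), y k - y₀⟫
          + ⟪N₂ (yt k - y k) - (yt k - y k), yt k - y k⟫))
        ≤ (1/ρ k) * (Bq k - Bq (k+1)) := by
      simp only [hBdef]
      rw [hyk]
      exact RPDR.blockN N₂ hN₂sa hN₂ τ (ρ k) hτ (lt_of_lt_of_le hρl (hρb k).1)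
        ((hρb k).2.trans hρu.le) _ _
    have hb3 : 2 * (-(1/σ) * (⟪xtst (k+1) - xt k,
            xb k - (x₀ + σ • (ContinuousLinearMap.adjoint K) y₀)⟫
          + ⟪xtst (k+1) - xt k, xtst (k+1) - xt k⟫))
        ≤ (1/ρx k) * (Cq k - Cq (k+1)) := by
      simp only [hCdef]
      rw [hxbk]
      exact RPDR.blockI σ (ρx k) hσ (lt_of_lt_of_le hρl (hρxb k).1)
        ((hρxb k).2.trans hρu.le) _ _
    have hb4 : 2 * (-(1/τ) * (⟪ytst (k+1) - yt k, yb k - (y₀ - τ • K x₀)⟫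
          + ⟪ytst (k+1) - yt k, ytst (k+1) - yt k⟫))
        ≤ (1/ρy k) * (Dq k - Dq (k+1)) := by
      simp only [hDdef]
      rw [hybk]
      exact RPDR.blockI τ (ρy k) hτ (lt_of_lt_of_le hρl (hρyb k).1)
        ((hρyb k).2.trans hρu.le) _ _
    simp only [hHdef]
    linarith [hcore, hb1, hb2, hb3, hb4]
  -- summation
  have hsum : 2 * ∑ k ∈ Finset.range (Kit+1), Hq k
      ≤ (1/ρl) * (A 0 + Bq 0 + Cq 0 + Dq 0) := by
    have h1 : ∑ k ∈ Finset.range (Kit+1), 2 * Hq k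
        ≤ ∑ k ∈ Finset.range (Kit+1),
            ((1/ρ k) * (A k - A (k+1)) + (1/ρ k) * (Bq k - Bq (k+1))
              + (1/ρx k) * (Cq k - Cq (k+1)) + (1/ρy k) * (Dq k - Dq (k+1))) :=
      Finset.sum_le_sum (fun k _ => step k)
    rw [← Finset.mul_sum] at h1
    have h2 : ∑ k ∈ Finset.range (Kit+1),
          ((1/ρ k) * (A k - A (k+1)) + (1/ρ k) * (Bq k - Bq (k+1))
            + (1/ρx k) * (Cq k - Cq (k+1)) + (1/ρy k) * (Dq k - Dq (k+1)))
        = (∑ k ∈ Finset.range (Kit+1), (1/ρ k) * (A k - A (k+1)))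
          + (∑ k ∈ Finset.range (Kit+1), (1/ρ k) * (Bq k - Bq (k+1)))
          + (∑ k ∈ Finset.range (Kit+1), (1/ρx k) * (Cq k - Cq (k+1)))
          + (∑ k ∈ Finset.range (Kit+1), (1/ρy k) * (Dq k - Dq (k+1))) := by
      rw [Finset.sum_add_distrib, Finset.sum_add_distrib, Finset.sum_add_distrib]
    have ha := RPDR.abel_aux ρl hρl A ρ hApos (fun k => (hρb k).1) hρmono (Kit+1)
    have hb := RPDR.abel_aux ρl hρl Bq ρ hBpos (fun k => (hρb k).1) hρmono (Kit+1)
    have hc := RPDR.abel_aux ρl hρl Cq ρx hCpos (fun k => (hρxb k).1) hρxmono (Kit+1)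
    have hd := RPDR.abel_aux ρl hρl Dq ρy hDpos (fun k => (hρyb k).1) hρymono (Kit+1)
    rw [h2] at h1
    linarith [h1, ha, hb, hc, hd]
  -- ergodic averaging
  have hFavg : F ((Kit + 1 : ℝ)⁻¹ • ∑ k ∈ Finset.range (Kit+1), xtst (k+1))
      ≤ ((Kit:ℝ)+1)⁻¹ * ∑ k ∈ Finset.range (Kit+1), F (xtst (k+1)) := by
    rw [Finset.smul_sum, Finset.mul_sum]
    have h := hF.map_sum_le (t := Finset.range (Kit+1)) (w := fun _ => ((Kit:ℝ)+1)⁻¹)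
      (p := fun k => xtst (k+1)) (fun _ _ => by positivity)
      (by rw [Finset.sum_const, Finset.card_range, nsmul_eq_mul]; push_cast; field_simp)
      (fun _ _ => Set.mem_univ _)
    simpa [smul_eq_mul] using h
  have hGavg : G ((Kit + 1 : ℝ)⁻¹ • ∑ k ∈ Finset.range (Kit+1), ytst (k+1))
      ≤ ((Kit:ℝ)+1)⁻¹ * ∑ k ∈ Finset.range (Kit+1), G (ytst (k+1)) := by
    rw [Finset.smul_sum, Finset.mul_sum]
    have h := hG.map_sum_le (t := Finset.range (Kit+1)) (w := fun _ => ((Kit:ℝ)+1)⁻¹)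
      (p := fun k => ytst (k+1)) (fun _ _ => by positivity)
      (by rw [Finset.sum_const, Finset.card_range, nsmul_eq_mul]; push_cast; field_simp)
      (fun _ _ => Set.mem_univ _)
    simpa [smul_eq_mul] using h
  have hKx : ⟪K ((Kit + 1 : ℝ)⁻¹ • ∑ k ∈ Finset.range (Kit+1), xtst (k+1)), y₀⟫
      = ((Kit:ℝ)+1)⁻¹ * ∑ k ∈ Finset.range (Kit+1), ⟪K (xtst (k+1)), y₀⟫ := by
    rw [map_smul, real_inner_smul_left, map_sum, sum_inner]
  have hKy : ⟪K x₀, (Kit + 1 : ℝ)⁻¹ • ∑ k ∈ Finset.range (Kit+1), ytst (k+1)⟫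
      = ((Kit:ℝ)+1)⁻¹ * ∑ k ∈ Finset.range (Kit+1), ⟪K x₀, ytst (k+1)⟫ := by
    rw [real_inner_smul_right, inner_sum]
  have hShe : ∑ k ∈ Finset.range (Kit+1), Hq k
      = (∑ k ∈ Finset.range (Kit+1), F (xtst (k+1)))
        + (∑ k ∈ Finset.range (Kit+1), ⟪K (xtst (k+1)), y₀⟫)
        - ((Kit:ℝ)+1) * G y₀ - ((Kit:ℝ)+1) * F x₀
        - (∑ k ∈ Finset.range (Kit+1), ⟪K x₀, ytst (k+1)⟫)
        + (∑ k ∈ Finset.range (Kit+1), G (ytst (k+1))) := by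
    simp only [hHdef, Finset.sum_add_distrib, Finset.sum_sub_distrib, Finset.sum_const,
      Finset.card_range, nsmul_eq_mul]
    push_cast
    ring
  -- combine
  have hErgRHS : ((Kit:ℝ)+1)⁻¹ * ∑ k ∈ Finset.range (Kit+1), Hq k
      = ((Kit:ℝ)+1)⁻¹ * (∑ k ∈ Finset.range (Kit+1), F (xtst (k+1)))
        + ((Kit:ℝ)+1)⁻¹ * (∑ k ∈ Finset.range (Kit+1), ⟪K (xtst (k+1)), y₀⟫)
        - G y₀ - F x₀
        - ((Kit:ℝ)+1)⁻¹ * (∑ k ∈ Finset.range (Kit+1), ⟪K x₀, ytst (k+1)⟫)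
        + ((Kit:ℝ)+1)⁻¹ * (∑ k ∈ Finset.range (Kit+1), G (ytst (k+1))) := by
    rw [hShe]
    field_simp
  have hErg : (F ((Kit + 1 : ℝ)⁻¹ • ∑ k ∈ Finset.range (Kit + 1), xtst (k + 1))
          + ⟪K ((Kit + 1 : ℝ)⁻¹ • ∑ k ∈ Finset.range (Kit + 1), xtst (k + 1)), y₀⟫
          - G y₀)
        - (F x₀
            + ⟪K x₀, (Kit + 1 : ℝ)⁻¹ • ∑ k ∈ Finset.range (Kit + 1), ytst (k + 1)⟫
            - G ((Kit + 1 : ℝ)⁻¹ • ∑ k ∈ Finset.range (Kit + 1), ytst (k + 1)))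
      ≤ ((Kit:ℝ)+1)⁻¹ * ∑ k ∈ Finset.range (Kit+1), Hq k := by
    rw [hErgRHS, hKx, hKy]
    linarith [hFavg, hGavg]
  -- the M-norm value at (x₀, y₀)
  have hS0 : A 0 + Bq 0 + Cq 0 + Dq 0
      = MnormSq σ τ N₁ N₂ ((x 0, y 0, xb 0, yb 0)
          - (x₀, y₀, x₀ + σ • (ContinuousLinearMap.adjoint K) y₀, y₀ - τ • K x₀)) := by
    simp only [hAdef, hBdef, hCdef, hDdef, MnormSq, Prod.mk_sub_mk,
      real_inner_self_eq_norm_sq]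
  -- boundedness of the image set
  obtain ⟨R₁, hR₁⟩ := isBounded_iff_forall_norm_le.mp hB₁
  obtain ⟨R₂, hR₂⟩ := isBounded_iff_forall_norm_le.mp hB₂
  have hbdd : BddAbove ((fun z : X × Y =>
      MnormSq σ τ N₁ N₂ ((x 0, y 0, xb 0, yb 0)
        - (z.1, z.2, z.1 + σ • (ContinuousLinearMap.adjoint K) z.2, z.2 - τ • K z.1)))
      '' (B₁ ×ˢ B₂)) := by
    set c1 : ℝ := ‖x 0‖ + R₁ with hc1
    set c2 : ℝ := ‖y 0‖ + R₂ with hc2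
    set c3 : ℝ := ‖xb 0‖ + (R₁ + σ * (‖ContinuousLinearMap.adjoint K‖ * R₂)) with hc3
    set c4 : ℝ := ‖yb 0‖ + (R₂ + τ * (‖K‖ * R₁)) with hc4
    refine ⟨(1/σ) * ((‖N₁‖+1) * c1^2) + (1/τ) * ((‖N₂‖+1) * c2^2)
      + (1/σ) * c3^2 + (1/τ) * c4^2, ?_⟩
    rintro _ ⟨z, hz, rfl⟩
    obtain ⟨hz1, hz2⟩ := hz
    have hn1 : ‖x 0 - z.1‖ ≤ c1 := (norm_sub_le _ _).trans (by
      simp only [hc1]; linarith [hR₁ z.1 hz1])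
    have hn2 : ‖y 0 - z.2‖ ≤ c2 := (norm_sub_le _ _).trans (by
      simp only [hc2]; linarith [hR₂ z.2 hz2])
    have hn3 : ‖xb 0 - (z.1 + σ • (ContinuousLinearMap.adjoint K) z.2)‖ ≤ c3 := by
      refine (norm_sub_le _ _).trans ?_
      have h1 : ‖z.1 + σ • (ContinuousLinearMap.adjoint K) z.2‖
          ≤ ‖z.1‖ + σ * ‖(ContinuousLinearMap.adjoint K) z.2‖ := by
        refine (norm_add_le _ _).trans ?_
        rw [norm_smul, Real.norm_eq_abs, abs_of_pos hσ]
      have h2 : ‖(ContinuousLinearMap.adjoint K) z.2‖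
          ≤ ‖ContinuousLinearMap.adjoint K‖ * ‖z.2‖ :=
        (ContinuousLinearMap.adjoint K).le_opNorm z.2
      have h3 : ‖ContinuousLinearMap.adjoint K‖ * ‖z.2‖
          ≤ ‖ContinuousLinearMap.adjoint K‖ * R₂ :=
        mul_le_mul_of_nonneg_left (hR₂ z.2 hz2) (norm_nonneg _)
      simp only [hc3]
      nlinarith [hR₁ z.1 hz1, hσ.le]
    have hn4 : ‖yb 0 - (z.2 - τ • K z.1)‖ ≤ c4 := by
      refine (norm_sub_le _ _).trans ?_
      have h1 : ‖z.2 - τ • K z.1‖ ≤ ‖z.2‖ + τ * ‖K z.1‖ := by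
        refine (norm_sub_le _ _).trans ?_
        rw [norm_smul, Real.norm_eq_abs, abs_of_pos hτ]
      have h2 : ‖K z.1‖ ≤ ‖K‖ * ‖z.1‖ := K.le_opNorm z.1
      have h3 : ‖K‖ * ‖z.1‖ ≤ ‖K‖ * R₁ :=
        mul_le_mul_of_nonneg_left (hR₁ z.1 hz1) (norm_nonneg _)
      simp only [hc4]
      nlinarith [hR₂ z.2 hz2, hτ.le]
    have hc1nn : (0:ℝ) ≤ c1 := (norm_nonneg _).trans hn1
    have hc2nn : (0:ℝ) ≤ c2 := (norm_nonneg _).trans hn2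
    have hc3nn : (0:ℝ) ≤ c3 := (norm_nonneg _).trans hn3
    have hc4nn : (0:ℝ) ≤ c4 := (norm_nonneg _).trans hn4
    simp only [MnormSq, Prod.mk_sub_mk]
    have t1 : ⟪N₁ (x 0 - z.1) - (x 0 - z.1), x 0 - z.1⟫ ≤ (‖N₁‖+1) * c1^2 := by
      have ha := real_inner_le_norm (N₁ (x 0 - z.1) - (x 0 - z.1)) (x 0 - z.1)
      have hb := norm_sub_le (N₁ (x 0 - z.1)) (x 0 - z.1)
      have hcn := N₁.le_opNorm (x 0 - z.1)
      have s1 : ‖N₁ (x 0 - z.1) - (x 0 - z.1)‖ * ‖x 0 - z.1‖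
          ≤ (‖N₁‖ * ‖x 0 - z.1‖ + ‖x 0 - z.1‖) * ‖x 0 - z.1‖ :=
        mul_le_mul_of_nonneg_right (hb.trans (add_le_add hcn le_rfl)) (norm_nonneg _)
      have s2 : (‖N₁‖ * ‖x 0 - z.1‖ + ‖x 0 - z.1‖) * ‖x 0 - z.1‖
          = (‖N₁‖+1) * ‖x 0 - z.1‖^2 := by ring
      have s3 : ‖x 0 - z.1‖^2 ≤ c1^2 := pow_le_pow_left₀ (norm_nonneg _) hn1 2
      have s4 : (‖N₁‖+1) * ‖x 0 - z.1‖^2 ≤ (‖N₁‖+1) * c1^2 :=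
        mul_le_mul_of_nonneg_left s3 (by positivity)
      linarith
    have t2 : ⟪N₂ (y 0 - z.2) - (y 0 - z.2), y 0 - z.2⟫ ≤ (‖N₂‖+1) * c2^2 := by
      have ha := real_inner_le_norm (N₂ (y 0 - z.2) - (y 0 - z.2)) (y 0 - z.2)
      have hb := norm_sub_le (N₂ (y 0 - z.2)) (y 0 - z.2)
      have hcn := N₂.le_opNorm (y 0 - z.2)
      have s1 : ‖N₂ (y 0 - z.2) - (y 0 - z.2)‖ * ‖y 0 - z.2‖
          ≤ (‖N₂‖ * ‖y 0 - z.2‖ + ‖y 0 - z.2‖) * ‖y 0 - z.2‖ :=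
        mul_le_mul_of_nonneg_right (hb.trans (add_le_add hcn le_rfl)) (norm_nonneg _)
      have s2 : (‖N₂‖ * ‖y 0 - z.2‖ + ‖y 0 - z.2‖) * ‖y 0 - z.2‖
          = (‖N₂‖+1) * ‖y 0 - z.2‖^2 := by ring
      have s3 : ‖y 0 - z.2‖^2 ≤ c2^2 := pow_le_pow_left₀ (norm_nonneg _) hn2 2
      have s4 : (‖N₂‖+1) * ‖y 0 - z.2‖^2 ≤ (‖N₂‖+1) * c2^2 :=
        mul_le_mul_of_nonneg_left s3 (by positivity)
      linarith
    have t3 : ‖xb 0 - (z.1 + σ • (ContinuousLinearMap.adjoint K) z.2)‖^2 ≤ c3^2 :=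
      pow_le_pow_left₀ (norm_nonneg _) hn3 2
    have t4 : ‖yb 0 - (z.2 - τ • K z.1)‖^2 ≤ c4^2 :=
      pow_le_pow_left₀ (norm_nonneg _) hn4 2
    have e1 : (1/σ) * ⟪N₁ (x 0 - z.1) - (x 0 - z.1), x 0 - z.1⟫
        ≤ (1/σ) * ((‖N₁‖+1) * c1^2) := by
      apply mul_le_mul_of_nonneg_left t1 (by positivity)
    have e2 : (1/τ) * ⟪N₂ (y 0 - z.2) - (y 0 - z.2), y 0 - z.2⟫
        ≤ (1/τ) * ((‖N₂‖+1) * c2^2) := by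
      apply mul_le_mul_of_nonneg_left t2 (by positivity)
    have e3 : (1/σ) * ‖xb 0 - (z.1 + σ • (ContinuousLinearMap.adjoint K) z.2)‖^2
        ≤ (1/σ) * c3^2 := by
      apply mul_le_mul_of_nonneg_left t3 (by positivity)
    have e4 : (1/τ) * ‖yb 0 - (z.2 - τ • K z.1)‖^2 ≤ (1/τ) * c4^2 := by
      apply mul_le_mul_of_nonneg_left t4 (by positivity)
    linarith
  have hmem : MnormSq σ τ N₁ N₂ ((x 0, y 0, xb 0, yb 0)
        - (x₀, y₀, x₀ + σ • (ContinuousLinearMap.adjoint K) y₀, y₀ - τ • K x₀))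
      ∈ ((fun z : X × Y =>
        MnormSq σ τ N₁ N₂ ((x 0, y 0, xb 0, yb 0)
          - (z.1, z.2, z.1 + σ • (ContinuousLinearMap.adjoint K) z.2, z.2 - τ • K z.1)))
        '' (B₁ ×ˢ B₂)) :=
    ⟨(x₀, y₀), Set.mk_mem_prod hx₀B hy₀B, rfl⟩
  have hle := le_csSup hbdd hmem
  -- final chain
  have hfin1 : ((Kit:ℝ)+1)⁻¹ * ∑ k ∈ Finset.range (Kit+1), Hq k
      ≤ (1 / (2 * ((Kit:ℝ) + 1) * ρl)) * (A 0 + Bq 0 + Cq 0 + Dq 0) := by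
    have h1 : ∑ k ∈ Finset.range (Kit+1), Hq k ≤ (1/(2*ρl)) * (A 0 + Bq 0 + Cq 0 + Dq 0) := by
      have e : (1/(2*ρl)) * (A 0 + Bq 0 + Cq 0 + Dq 0)
          = ((1/ρl) * (A 0 + Bq 0 + Cq 0 + Dq 0)) / 2 := by
        rw [eq_div_iff (two_ne_zero)]
        field_simp
      rw [e]
      linarith
    have h2 : ((Kit:ℝ)+1)⁻¹ * ((1/(2*ρl)) * (A 0 + Bq 0 + Cq 0 + Dq 0))
        = (1 / (2 * ((Kit:ℝ) + 1) * ρl)) * (A 0 + Bq 0 + Cq 0 + Dq 0) := by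
      rw [← mul_assoc]
      congr 1
      rw [inv_eq_one_div, div_mul_div_comm, one_mul]
      congr 1
      ring
    calc ((Kit:ℝ)+1)⁻¹ * ∑ k ∈ Finset.range (Kit+1), Hq k
        ≤ ((Kit:ℝ)+1)⁻¹ * ((1/(2*ρl)) * (A 0 + Bq 0 + Cq 0 + Dq 0)) :=
          mul_le_mul_of_nonneg_left h1 (by positivity)
      _ = _ := h2
  have hcoef : (0:ℝ) ≤ 1 / (2 * ((Kit:ℝ) + 1) * ρl) := by
    apply le_of_lt
    apply div_pos one_pos
    have := mul_pos (mul_pos (two_pos (α := ℝ)) hnpos) hρl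
    exact this
  calc (F ((Kit + 1 : ℝ)⁻¹ • ∑ k ∈ Finset.range (Kit + 1), xtst (k + 1))
          + ⟪K ((Kit + 1 : ℝ)⁻¹ • ∑ k ∈ Finset.range (Kit + 1), xtst (k + 1)), y₀⟫
          - G y₀)
        - (F x₀
            + ⟪K x₀, (Kit + 1 : ℝ)⁻¹ • ∑ k ∈ Finset.range (Kit + 1), ytst (k + 1)⟫
            - G ((Kit + 1 : ℝ)⁻¹ • ∑ k ∈ Finset.range (Kit + 1), ytst (k + 1)))
      ≤ ((Kit:ℝ)+1)⁻¹ * ∑ k ∈ Finset.range (Kit+1), Hq k := hErg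
    _ ≤ (1 / (2 * ((Kit:ℝ) + 1) * ρl)) * (A 0 + Bq 0 + Cq 0 + Dq 0) := hfin1
    _ ≤ (1 / (2 * ((Kit:ℝ) + 1) * ρl)) * sSup _ := by
        rw [hS0]
        exact mul_le_mul_of_nonneg_left hle hcoef


end
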